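/- arXiv:1707.00430 — 2 statements merged into one kernel-verified Lean document; each statement's English description precedes it below -/
import Mathlib

section
/- Let j ≥ 1 be an integer, let a_0, …, a_{j−1} be nonnegative real numbers, and let x ≥ 0 satisfy x^j ≤ Σ_{l=0}^{j−1} a_l x^l. Then x ≤ j · Σ_{l=0}^{j−1} a_l^{1/(j−l)}. -/
/-- If `j ≥ 1`, the `a l` are nonnegative reals, `x ≥ 0`, and
`x^j ≤ ∑_{l<j} a_l x^l`, then `x ≤ j * ∑_{l<j} a_l^{1/(j-l)}`. -/
theorem stmt_0 (j : ℕ) (hj : 1 ≤ j) (a : ℕ → ℝ) (ha : ∀ l, l < j → 0 ≤ a l)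
    (x : ℝ) (hx : 0 ≤ x)
    (h : x ^ j ≤ ∑ l ∈ Finset.range j, a l * x ^ l) :
    x ≤ (j : ℝ) * ∑ l ∈ Finset.range j, (a l) ^ ((1 : ℝ) / ((j : ℝ) - (l : ℝ))) := by
  by_contra hcon
  push_neg at hcon
  set S := ∑ l ∈ Finset.range j, (a l) ^ ((1 : ℝ) / ((j : ℝ) - (l : ℝ))) with hS
  have hS0 : 0 ≤ S :=
    Finset.sum_nonneg fun l hl => Real.rpow_nonneg (ha l (Finset.mem_range.mp hl)) _
  have hjpos : (0:ℝ) < j := by exact_mod_cast hj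
  have hxpos : 0 < x := lt_of_le_of_lt (by positivity) hcon
  have hterm : ∀ l ∈ Finset.range j, a l * x ^ l < (x / j) ^ (j - l) * x ^ l := by
    intro l hl
    have hlj := Finset.mem_range.mp hl
    have h1 : (a l) ^ ((1:ℝ)/((j:ℝ)-(l:ℝ))) ≤ S :=
      Finset.single_le_sum (f := fun i => (a i) ^ ((1:ℝ)/((j:ℝ)-(i:ℝ))))
        (fun i hi => Real.rpow_nonneg (ha i (Finset.mem_range.mp hi)) _) hl
    have h2 : (a l) ^ ((1:ℝ)/((j:ℝ)-(l:ℝ))) < x / j := by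
      rw [lt_div_iff₀ hjpos]
      have : (a l) ^ ((1:ℝ)/((j:ℝ)-(l:ℝ))) * j ≤ S * j :=
        mul_le_mul_of_nonneg_right h1 hjpos.le
      nlinarith
    have hcast : (1:ℝ)/((j:ℝ)-(l:ℝ)) = (((j - l : ℕ) : ℝ))⁻¹ := by
      rw [one_div, Nat.cast_sub hlj.le]
    have ha' : a l = ((a l) ^ ((1:ℝ)/((j:ℝ)-(l:ℝ)))) ^ (j - l) := by
      rw [hcast, Real.rpow_inv_natCast_pow (ha l hlj) (by omega)]
    have h3 : a l < (x / j) ^ (j - l) := by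
      rw [ha']
      exact pow_lt_pow_left₀ h2 (Real.rpow_nonneg (ha l hlj) _) (by omega)
    exact mul_lt_mul_of_pos_right h3 (pow_pos hxpos l)
  have hsum : ∑ l ∈ Finset.range j, a l * x ^ l
      < ∑ l ∈ Finset.range j, (x / j) ^ (j - l) * x ^ l :=
    Finset.sum_lt_sum_of_nonempty ⟨0, Finset.mem_range.mpr hj⟩ hterm
  have hbound : ∑ l ∈ Finset.range j, (x / j) ^ (j - l) * x ^ l ≤ x ^ j := by
    have hterm2 : ∀ l ∈ Finset.range j, (x / j) ^ (j - l) * x ^ l ≤ x ^ j / j := by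
      intro l hl
      have hlj := Finset.mem_range.mp hl
      have hxe : (x / j) ^ (j - l) * x ^ l = x ^ j / (j:ℝ) ^ (j - l) := by
        rw [div_pow, div_mul_eq_mul_div, ← pow_add, Nat.sub_add_cancel hlj.le]
      rw [hxe]
      apply div_le_div_of_nonneg_left (by positivity) hjpos
      calc (j:ℝ) = (j:ℝ) ^ 1 := (pow_one _).symm
        _ ≤ (j:ℝ) ^ (j - l) := pow_le_pow_right₀ (by exact_mod_cast hj) (by omega)
    calc ∑ l ∈ Finset.range j, (x / j) ^ (j - l) * x ^ l
        ≤ ∑ l ∈ Finset.range j, x ^ j / j := Finset.sum_le_sum hterm2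
      _ = j * (x ^ j / j) := by rw [Finset.sum_const, Finset.card_range]; ring
      _ = x ^ j := by field_simp
  linarith
end

section
/- Let k ∈ ℂ⁺ and let f : ℝ³ → ℂ be continuous with compact support. For r > 0 and σ ∈ S², define B_r^{(2)}(f)(σ) := r ∫_{ℝ³} [e^{ik(−r+|rσ−y|+|y|)} / (4π |rσ−y| |y|)] f(y) dy and B_∞^{(2)}(f)(σ) := (4π)^{−1} ∫_{ℝ³} [e^{ik|y|(1−⟨σ,ŷ⟩)} / |y|] f(y) dy, where ŷ := y/|y|. Then B_r^{(2)}(f) converges to B_∞^{(2)}(f) uniformly on S² as r → ∞. -/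
open MeasureTheory Metric Filter
open scoped RealInnerProductSpace

noncomputable section

/-- `B_r^{(2)}(f)(σ) = r ∫ e^{ik(−r+|rσ−y|+|y|)}/(4π|rσ−y||y|) · f(y) dy`. -/
def Br2 (k : ℂ) (f : EuclideanSpace ℝ (Fin 3) → ℂ)
    (r : ℝ) (σ : EuclideanSpace ℝ (Fin 3)) : ℂ :=
  (r : ℂ) * ∫ y : EuclideanSpace ℝ (Fin 3),
    Complex.exp (Complex.I * k * ((-r + ‖r • σ - y‖ + ‖y‖ : ℝ) : ℂ)) /
      ((4 * Real.pi * ‖r • σ - y‖ * ‖y‖ : ℝ) : ℂ) * f y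

/-- `B_∞^{(2)}(f)(σ) = (4π)⁻¹ ∫ e^{ik|y|(1−⟨σ,ŷ⟩)}/|y| · f(y) dy`. -/
def Binf2 (k : ℂ) (f : EuclideanSpace ℝ (Fin 3) → ℂ)
    (σ : EuclideanSpace ℝ (Fin 3)) : ℂ :=
  ((4 * Real.pi : ℝ) : ℂ)⁻¹ * ∫ y : EuclideanSpace ℝ (Fin 3),
    Complex.exp (Complex.I * k * ((‖y‖ * (1 - ⟪σ, ‖y‖⁻¹ • y⟫) : ℝ) : ℂ)) / ((‖y‖ : ℝ) : ℂ) * f y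

end

section Aux

open Set
open scoped ENNReal

local notation "E3" => EuclideanSpace ℝ (Fin 3)

/-- Polar-coordinate formula for the Lebesgue integral of a radial function on `ℝ³`. -/
lemma lintegral_norm_comp_aux (g : ℝ → ℝ≥0∞) (hg : Measurable g) :
    ∫⁻ y : E3, g ‖y‖ =
      (volume : Measure E3).toSphere Set.univ *
        ∫⁻ r in Set.Ioi (0:ℝ), ENNReal.ofReal (r^2) * g r := by
  have hdim : Module.finrank ℝ E3 = 3 := finrank_euclideanSpace_fin
  calc
    ∫⁻ y : E3, g ‖y‖ = ∫⁻ y in ({0}ᶜ : Set E3), g ‖y‖ := by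
      rw [restrict_compl_singleton]
    _ = ∫⁻ x : ({0}ᶜ : Set E3), g ‖(x : E3)‖ ∂((volume : Measure E3).comap (↑)) :=
      (lintegral_subtype_comap (measurableSet_singleton 0).compl (fun y : E3 => g ‖y‖)).symm
    _ = ∫⁻ p : sphere (0:E3) 1 × Ioi (0:ℝ), g p.2
          ∂((volume : Measure E3).toSphere.prod (.volumeIoiPow (Module.finrank ℝ E3 - 1))) := by
      rw [← (volume : Measure E3).measurePreserving_homeomorphUnitSphereProd.lintegral_comp
        (f := fun p : sphere (0:E3) 1 × Ioi (0:ℝ) => g p.2)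
        (((hg.comp measurable_subtype_coe).comp measurable_snd))]
      simp [homeomorphUnitSphereProd_apply_snd_coe]
    _ = (volume : Measure E3).toSphere Set.univ *
          ∫⁻ r : Ioi (0:ℝ), g r ∂(Measure.volumeIoiPow (Module.finrank ℝ E3 - 1)) := by
      refine (lintegral_prod _
        (((hg.comp measurable_subtype_coe).comp measurable_snd).aemeasurable)).trans ?_
      simp only [Function.comp_apply]
      rw [lintegral_const, mul_comm]
    _ = _ := by
      rw [hdim]
      congr 1
      have h1 : ∫⁻ r : Ioi (0:ℝ), g r ∂(Measure.volumeIoiPow 2)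
          = ∫⁻ r : Ioi (0:ℝ), ENNReal.ofReal (r.1^2) * g r
              ∂(Measure.comap Subtype.val (volume : Measure ℝ)) :=
        lintegral_withDensity_eq_lintegral_mul _
          ((measurable_subtype_coe.pow_const 2).ennreal_ofReal)
          (hg.comp measurable_subtype_coe)
      exact h1.trans
        (lintegral_subtype_comap measurableSet_Ioi (fun r : ℝ => ENNReal.ofReal (r^2) * g r))

/-- The majorant `y ↦ ‖f y‖ / ‖y‖` is integrable on `ℝ³`. -/
lemma integrable_majorant (f : E3 → ℂ) (hf : Continuous f)
    {R : ℝ} (hRsupp : tsupport f ⊆ closedBall (0:E3) R) {M : ℝ} (hM : ∀ x, ‖f x‖ ≤ M) :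
    Integrable (fun y : E3 => ‖f y‖ / ‖y‖) := by
  have hM0 : 0 ≤ M := (norm_nonneg (f 0)).trans (hM 0)
  set G : ℝ → ℝ≥0∞ := fun t => Set.indicator (Iic R) (fun t => ENNReal.ofReal (M * t⁻¹)) t
    with hG
  have hGmeas : Measurable G :=
    Measurable.indicator ((measurable_const.mul measurable_inv).ennreal_ofReal) measurableSet_Iic
  refine ⟨((hf.norm.measurable).div measurable_norm).aestronglyMeasurable, ?_⟩
  rw [hasFiniteIntegral_iff_norm]
  have hpt : ∀ y : E3, ENNReal.ofReal ‖‖f y‖ / ‖y‖‖ ≤ G ‖y‖ := by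
    intro y
    rw [Real.norm_eq_abs, abs_of_nonneg (by positivity)]
    by_cases hyR : ‖y‖ ≤ R
    · simp only [hG]
      rw [Set.indicator_of_mem (mem_Iic.2 hyR)]
      apply ENNReal.ofReal_le_ofReal
      rw [div_eq_mul_inv]
      exact mul_le_mul_of_nonneg_right (hM y) (by positivity)
    · have hyT : y ∉ tsupport f := fun h => hyR (by simpa [mem_closedBall_zero_iff] using hRsupp h)
      rw [image_eq_zero_of_notMem_tsupport hyT]
      simp
  calc ∫⁻ y : E3, ENNReal.ofReal ‖‖f y‖ / ‖y‖‖ ≤ ∫⁻ y : E3, G ‖y‖ := lintegral_mono hpt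
    _ = (volume : Measure E3).toSphere Set.univ *
          ∫⁻ r in Set.Ioi (0:ℝ), ENNReal.ofReal (r^2) * G r := lintegral_norm_comp_aux G hGmeas
    _ < ⊤ := by
      refine ENNReal.mul_lt_top (measure_lt_top _ _) ?_
      have hb : ∀ r : ℝ, ENNReal.ofReal (r^2) * G r
          ≤ Set.indicator (Icc (0:ℝ) R) (fun _ => ENNReal.ofReal (M * R)) r := by
        intro r
        simp only [hG]
        by_cases h1 : r ≤ R
        · rw [Set.indicator_of_mem (mem_Iic.2 h1)]
          rcases le_or_gt r 0 with h2 | h2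
          · have hle : M * r⁻¹ ≤ 0 :=
              mul_nonpos_of_nonneg_of_nonpos hM0 (inv_nonpos.2 h2)
            rw [ENNReal.ofReal_eq_zero.2 hle, mul_zero]
            exact bot_le
          · have hmem : r ∈ Icc (0:ℝ) R := ⟨h2.le, h1⟩
            rw [Set.indicator_of_mem hmem, ← ENNReal.ofReal_mul (by positivity)]
            apply ENNReal.ofReal_le_ofReal
            have hfe : r^2 * (M * r⁻¹) = M * r := by field_simp
            rw [hfe]
            exact mul_le_mul_of_nonneg_left h1 hM0
        · rw [Set.indicator_of_notMem (by simpa using h1), mul_zero]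
          exact bot_le
      calc ∫⁻ r in Set.Ioi (0:ℝ), ENNReal.ofReal (r^2) * G r
          ≤ ∫⁻ r : ℝ, Set.indicator (Icc (0:ℝ) R) (fun _ => ENNReal.ofReal (M * R)) r :=
            lintegral_mono' Measure.restrict_le_self hb
        _ = ENNReal.ofReal (M * R) * volume (Icc (0:ℝ) R) := by
            rw [lintegral_indicator measurableSet_Icc, setLIntegral_const]
        _ < ⊤ := ENNReal.mul_lt_top ENNReal.ofReal_lt_top (measure_Icc_lt_top)

lemma abs_exp_mul_le (k : ℂ) (hk : 0 ≤ k.im) (u : ℝ) (hu : 0 ≤ u) :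
    ‖Complex.exp (Complex.I * k * (u : ℂ))‖ ≤ 1 := by
  rw [Complex.norm_exp, Real.exp_le_one_iff]
  have : (Complex.I * k * (u : ℂ)).re = -(k.im * u) := by
    simp [Complex.mul_re, Complex.mul_im]
  rw [this]
  exact neg_nonpos.mpr (by positivity)

lemma scalar_est (k : ℂ) (hk : 0 ≤ k.im) {R r n w s : ℝ} (hR : 1 ≤ R)
    (hr1 : 2*R ≤ r) (hr2 : 2 * ‖k‖ * R^2 ≤ r)
    (hn0 : 0 < n) (hnR : n ≤ R) (hwr : |w - r| ≤ n)
    (hwsq : w^2 = r^2 - 2*r*s + n^2) (hsn : |s| ≤ n) (c : ℂ) :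
    ‖((4 * Real.pi : ℝ) : ℂ)⁻¹ *
        (Complex.exp (Complex.I * k * ((n - s : ℝ) : ℂ)) / ((n : ℝ) : ℂ) * c) -
      (r : ℂ) *
        (Complex.exp (Complex.I * k * ((-r + w + n : ℝ) : ℂ)) /
          ((4 * Real.pi * w * n : ℝ) : ℂ) * c)‖ ≤
      (2*R + 4 * ‖k‖ * R^2) / (r * (4 * Real.pi)) * (‖c‖ / n) := by
  have hπ : (0:ℝ) < Real.pi := Real.pi_pos
  have hr0 : (0:ℝ) < r := by linarith
  have hwlb : r - R ≤ w := by
    have h1 : r - w ≤ |w - r| := by rw [abs_sub_comm]; exact le_abs_self _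
    linarith
  have hw0 : (0:ℝ) < w := by linarith
  set δ := w - (r - s) with hδ
  have hδmul : δ * (w + (r - s)) = n^2 - s^2 := by
    have : δ * (w + (r - s)) = w^2 - (r - s)^2 := by ring
    rw [this, hwsq]; ring
  have hsum : r ≤ w + (r - s) := by
    have h2 := (abs_le.1 hsn).2
    linarith
  have hns2 : 0 ≤ n^2 - s^2 := by nlinarith [abs_le.1 hsn]
  have hδ0 : 0 ≤ δ := by nlinarith
  have hδle : δ ≤ R^2 / r := by
    rw [le_div_iff₀ hr0]
    nlinarith [abs_le.1 hsn]
  have ht0 : 0 ≤ n - s := by nlinarith [abs_le.1 hsn]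
  have hphase : (-r + w + n : ℝ) = (n - s) + δ := by rw [hδ]; ring
  have hwC : ((w:ℝ):ℂ) ≠ 0 := Complex.ofReal_ne_zero.2 hw0.ne'
  have hnC : ((n:ℝ):ℂ) ≠ 0 := Complex.ofReal_ne_zero.2 hn0.ne'
  have hπC : ((Real.pi:ℝ):ℂ) ≠ 0 := Complex.ofReal_ne_zero.2 hπ.ne'
  have hiden :
      ((4 * Real.pi : ℝ) : ℂ)⁻¹ *
        (Complex.exp (Complex.I * k * ((n - s : ℝ) : ℂ)) / ((n : ℝ) : ℂ) * c) -
      (r : ℂ) *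
        (Complex.exp (Complex.I * k * ((-r + w + n : ℝ) : ℂ)) /
          ((4 * Real.pi * w * n : ℝ) : ℂ) * c)
      = -((Complex.exp (Complex.I * k * ((n - s : ℝ) : ℂ)) * c / ((4 * Real.pi * n : ℝ) : ℂ)) *
          (((r / w : ℝ) : ℂ) * Complex.exp (Complex.I * k * ((δ : ℝ) : ℂ)) - 1)) := by
    have hexp : Complex.exp (Complex.I * k * ((-r + w + n : ℝ) : ℂ))
        = Complex.exp (Complex.I * k * ((n - s : ℝ) : ℂ)) *
          Complex.exp (Complex.I * k * ((δ : ℝ) : ℂ)) := by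
      rw [hphase, Complex.ofReal_add, mul_add, Complex.exp_add]
    rw [hexp]
    generalize Complex.exp (Complex.I * k * ((n - s : ℝ) : ℂ)) = a
    generalize Complex.exp (Complex.I * k * ((δ : ℝ) : ℂ)) = b
    push_cast
    ring
  rw [hiden, norm_neg, norm_mul]
  have hfac1 : ‖Complex.exp (Complex.I * k * ((n - s : ℝ) : ℂ)) * c / ((4 * Real.pi * n : ℝ) : ℂ)‖
      ≤ ‖c‖ / (4 * Real.pi * n) := by
    rw [norm_div, norm_mul]
    have h1 : ‖Complex.exp (Complex.I * k * ((n - s : ℝ) : ℂ))‖ ≤ 1 := abs_exp_mul_le k hk _ ht0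
    have h2 : ‖((4 * Real.pi * n : ℝ) : ℂ)‖ = 4 * Real.pi * n := by
      rw [Complex.norm_real, Real.norm_eq_abs, abs_of_pos (by positivity)]
    rw [h2]
    gcongr
    exact mul_le_of_le_one_left (norm_nonneg c) h1
  have hrw2 : r / w ≤ 2 := by
    rw [div_le_iff₀ hw0]; linarith
  have hr2w : r ≤ 2 * w := by linarith
  have hrw1 : |r / w - 1| ≤ 2 * R / r := by
    rw [abs_sub_comm, show (1 : ℝ) - r/w = (w - r)/w by field_simp, abs_div,
      abs_of_pos hw0, div_le_div_iff₀ hw0 hr0]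
    have h3 : |w - r| ≤ R := hwr.trans hnR
    have h8 : |w - r| * r ≤ R * r := mul_le_mul_of_nonneg_right h3 hr0.le
    have h9 : R * r ≤ 2 * R * w := by
      nlinarith [mul_le_mul_of_nonneg_left hr2w (show (0:ℝ) ≤ R by linarith)]
    linarith
  have hexpδ : ‖Complex.exp (Complex.I * k * ((δ : ℝ) : ℂ)) - 1‖ ≤ 2 * (‖k‖ * δ) := by
    have habs : ‖Complex.I * k * ((δ : ℝ) : ℂ)‖ = ‖k‖ * δ := by
      rw [norm_mul, norm_mul, Complex.norm_I, Complex.norm_real, Real.norm_eq_abs, abs_of_nonneg hδ0, one_mul]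
    have hle1 : ‖Complex.I * k * ((δ : ℝ) : ℂ)‖ ≤ 1 := by
      rw [habs]
      have h5 : ‖k‖ * δ ≤ ‖k‖ * (R^2 / r) :=
        mul_le_mul_of_nonneg_left hδle (norm_nonneg k)
      have h4 : ‖k‖ * (R^2/r) ≤ 1/2 := by
        rw [show ‖k‖ * (R^2/r) = (‖k‖ * R^2)/r by ring,
          div_le_iff₀ hr0]
        linarith
      exact (h5.trans h4).trans (by norm_num)
    have h6 := Complex.norm_exp_sub_one_le hle1
    rw [habs] at h6
    simpa using h6
  have hfac2 : ‖((r / w : ℝ) : ℂ) * Complex.exp (Complex.I * k * ((δ : ℝ) : ℂ)) - 1‖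
      ≤ (2*R + 4 * ‖k‖ * R^2) / r := by
    have hsplit : ((r / w : ℝ) : ℂ) * Complex.exp (Complex.I * k * ((δ : ℝ) : ℂ)) - 1
        = ((r / w : ℝ) : ℂ) * (Complex.exp (Complex.I * k * ((δ : ℝ) : ℂ)) - 1)
          + (((r / w - 1 : ℝ)) : ℂ) := by push_cast; ring
    rw [hsplit]
    refine (norm_add_le _ _).trans ?_
    rw [norm_mul, Complex.norm_real, Complex.norm_real,
      Real.norm_eq_abs, Real.norm_eq_abs, abs_of_pos (by positivity : (0:ℝ) < r/w)]
    have h5 : r / w * ‖Complex.exp (Complex.I * k * ((δ : ℝ) : ℂ)) - 1‖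
        ≤ 2 * (2 * (‖k‖ * δ)) := by
      have := mul_le_mul hrw2 hexpδ (norm_nonneg _) (by norm_num)
      linarith
    have h6 : ‖k‖ * δ ≤ ‖k‖ * (R^2/r) :=
      mul_le_mul_of_nonneg_left hδle (norm_nonneg k)
    have h7 : (2*R + 4 * ‖k‖ * R^2) / r = 4 * (‖k‖ * (R^2/r)) + 2*R/r := by
      field_simp; ring
    rw [h7]
    linarith
  calc ‖Complex.exp (Complex.I * k * ((n - s : ℝ) : ℂ)) * c / ((4 * Real.pi * n : ℝ) : ℂ)‖ *
        ‖((r / w : ℝ) : ℂ) * Complex.exp (Complex.I * k * ((δ : ℝ) : ℂ)) - 1‖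
      ≤ (‖c‖ / (4 * Real.pi * n)) * ((2*R + 4 * ‖k‖ * R^2) / r) := by
        exact mul_le_mul hfac1 hfac2 (norm_nonneg _) (by positivity)
    _ = (2*R + 4 * ‖k‖ * R^2) / (r * (4 * Real.pi)) * (‖c‖ / n) := by
        field_simp


lemma geom_facts {R r : ℝ} (hr0 : 0 < r)
    {σ y : E3} (hσ : ‖σ‖ = 1) :
    |‖r • σ - y‖ - r| ≤ ‖y‖ ∧
    ‖r • σ - y‖^2 = r^2 - 2*r*⟪σ, y⟫ + ‖y‖^2 ∧
    |⟪σ, y⟫| ≤ ‖y‖ := by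
  have hnr : ‖r • σ‖ = r := by
    rw [norm_smul, hσ]; simp [abs_of_pos hr0]
  refine ⟨?_, ?_, ?_⟩
  · have := abs_norm_sub_norm_le (r • σ - y) (r • σ)
    simpa [hnr] using this
  · have h := @norm_sub_sq_real (EuclideanSpace ℝ (Fin 3)) _ _ (r • σ) y
    rw [h, hnr, real_inner_smul_left]
    ring
  · simpa [hσ] using abs_real_inner_le_norm σ y

lemma key_est (k : ℂ) (hk : 0 ≤ k.im) {R r : ℝ} (hR : 1 ≤ R)
    (hr1 : 2*R ≤ r) (hr2 : 2 * ‖k‖ * R^2 ≤ r)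
    {σ y : E3} (hσ : ‖σ‖ = 1) (hy : ‖y‖ ≤ R) (hy0 : y ≠ 0) (c : ℂ) :
    ‖((4 * Real.pi : ℝ) : ℂ)⁻¹ *
        (Complex.exp (Complex.I * k * ((‖y‖ - ⟪σ, y⟫ : ℝ) : ℂ)) / ((‖y‖ : ℝ) : ℂ) * c) -
      (r : ℂ) *
        (Complex.exp (Complex.I * k * ((-r + ‖r • σ - y‖ + ‖y‖ : ℝ) : ℂ)) /
          ((4 * Real.pi * ‖r • σ - y‖ * ‖y‖ : ℝ) : ℂ) * c)‖ ≤
      (2*R + 4 * ‖k‖ * R^2) / (r * (4 * Real.pi)) * (‖c‖ / ‖y‖) := by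
  have hr0 : (0:ℝ) < r := by linarith
  obtain ⟨h1, h2, h3⟩ := geom_facts (R := R) hr0 (y := y) hσ
  exact scalar_est k hk hR hr1 hr2 (norm_pos_iff.2 hy0) hy h1 h2 h3 c

/-- Bound for the integrand of `Br2`. -/
lemma bound_r (k : ℂ) (hk : 0 ≤ k.im) {R r : ℝ} (hR : 1 ≤ R)
    (hr1 : 2*R ≤ r)
    {σ y : E3} (hσ : ‖σ‖ = 1) (hy : ‖y‖ ≤ R) (hy0 : y ≠ 0) (c : ℂ) :
    ‖(r : ℂ) *
        (Complex.exp (Complex.I * k * ((-r + ‖r • σ - y‖ + ‖y‖ : ℝ) : ℂ)) /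
          ((4 * Real.pi * ‖r • σ - y‖ * ‖y‖ : ℝ) : ℂ) * c)‖ ≤ ‖c‖ / ‖y‖ := by
  have hπ : (0:ℝ) < Real.pi := Real.pi_pos
  have hπ3 : (3:ℝ) < Real.pi := Real.pi_gt_three
  have hr0 : (0:ℝ) < r := by linarith
  obtain ⟨h1, h2, h3⟩ := geom_facts (R := R) hr0 (y := y) hσ
  set n := ‖y‖ with hn
  set w := ‖r • σ - y‖ with hw
  set s := ⟪σ, y⟫ with hs
  have hn0 : 0 < n := norm_pos_iff.2 hy0
  have hwlb : r - R ≤ w := by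
    have h4 : r - w ≤ |w - r| := by rw [abs_sub_comm]; exact le_abs_self _
    have := h1.trans hy
    linarith
  have hw0 : (0:ℝ) < w := by linarith
  have hr2w : r ≤ 2 * w := by linarith
  have hphase : 0 ≤ -r + w + n := by
    -- -r + w + n = (n - s) + (w - (r - s))
    have hsum : r ≤ w + (r - s) := by
      have := (abs_le.1 h3).2
      linarith
    have hδmul : (w - (r - s)) * (w + (r - s)) = n^2 - s^2 := by
      have he : (w - (r - s)) * (w + (r - s)) = w^2 - (r - s)^2 := by ring
      rw [he, h2]; ring
    have hns2 : 0 ≤ n^2 - s^2 := by nlinarith [abs_le.1 h3]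
    have hδ0 : 0 ≤ w - (r - s) := by nlinarith
    have ht0 : 0 ≤ n - s := by nlinarith [abs_le.1 h3]
    linarith
  rw [norm_mul, norm_mul, norm_div, Complex.norm_real, Complex.norm_real,
    Real.norm_eq_abs, Real.norm_eq_abs, abs_of_pos hr0,
    abs_of_pos (show (0:ℝ) < 4 * Real.pi * w * n by positivity)]
  have hexp : ‖Complex.exp (Complex.I * k * ((-r + w + n : ℝ) : ℂ))‖ ≤ 1 :=
    abs_exp_mul_le k hk _ hphase
  calc r * (‖Complex.exp (Complex.I * k * ((-r + w + n : ℝ) : ℂ))‖ / (4 * Real.pi * w * n) * ‖c‖)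
      ≤ r * (1 / (4 * Real.pi * w * n) * ‖c‖) := by gcongr
    _ = r / (4 * Real.pi * w) * (‖c‖ / n) := by ring
    _ ≤ 1 * (‖c‖ / n) := by
        have hle : r / (4 * Real.pi * w) ≤ 1 := by
          rw [div_le_one (by positivity)]
          nlinarith
        exact mul_le_mul_of_nonneg_right hle (by positivity)
    _ = ‖c‖ / n := one_mul _

/-- Bound for the integrand of `Binf2`. -/
lemma bound_inf (k : ℂ) (hk : 0 ≤ k.im)
    {σ y : E3} (hσ : ‖σ‖ = 1) (hy0 : y ≠ 0) (c : ℂ) :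
    ‖((4 * Real.pi : ℝ) : ℂ)⁻¹ *
        (Complex.exp (Complex.I * k * ((‖y‖ - ⟪σ, y⟫ : ℝ) : ℂ)) / ((‖y‖ : ℝ) : ℂ) * c)‖
      ≤ ‖c‖ / ‖y‖ := by
  have hπ : (0:ℝ) < Real.pi := Real.pi_pos
  have hπ3 : (3:ℝ) < Real.pi := Real.pi_gt_three
  have hn0 : 0 < ‖y‖ := norm_pos_iff.2 hy0
  have ht0 : 0 ≤ ‖y‖ - ⟪σ, y⟫ := by
    have := abs_real_inner_le_norm σ y
    rw [hσ, one_mul] at this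
    have := (abs_le.1 this).2
    linarith
  have hexp : ‖Complex.exp (Complex.I * k * ((‖y‖ - ⟪σ, y⟫ : ℝ) : ℂ))‖ ≤ 1 :=
    abs_exp_mul_le k hk _ ht0
  rw [norm_mul, norm_inv, norm_mul, norm_div, Complex.norm_real, Complex.norm_real,
    Real.norm_eq_abs, Real.norm_eq_abs, abs_of_pos (by positivity : (0:ℝ) < 4 * Real.pi),
    abs_of_pos hn0]
  calc (4 * Real.pi)⁻¹ * (‖Complex.exp (Complex.I * k * ((‖y‖ - ⟪σ, y⟫ : ℝ) : ℂ))‖ / ‖y‖ * ‖c‖)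
      ≤ (4 * Real.pi)⁻¹ * (1 / ‖y‖ * ‖c‖) := by gcongr
    _ = (4 * Real.pi)⁻¹ * (‖c‖ / ‖y‖) := by ring
    _ ≤ 1 * (‖c‖ / ‖y‖) := by
        have hle : (4 * Real.pi)⁻¹ ≤ 1 := by
          rw [inv_le_one₀ (by positivity)]
          linarith
        exact mul_le_mul_of_nonneg_right hle (by positivity)
    _ = ‖c‖ / ‖y‖ := one_mul _

end Aux

section Main

open Set
open scoped ENNReal

local notation "E3" => EuclideanSpace ℝ (Fin 3)

/-- For `k ∈ ℂ⁺` and continuous compactly supported `f : ℝ³ → ℂ`,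
`B_r^{(2)}(f)` converges to `B_∞^{(2)}(f)` uniformly on the unit sphere `S²` as `r → ∞`. -/
theorem stmt_9 (k : ℂ) (hk : 0 < k.im)
    (f : EuclideanSpace ℝ (Fin 3) → ℂ) (hf : Continuous f) (hsupp : HasCompactSupport f) :
    TendstoUniformlyOn (fun (r : ℝ) (σ : EuclideanSpace ℝ (Fin 3)) => Br2 k f r σ)
      (Binf2 k f) atTop (sphere (0 : EuclideanSpace ℝ (Fin 3)) 1) := by
  classical
  have hπ : (0:ℝ) < Real.pi := Real.pi_pos
  have hk0 : 0 ≤ k.im := hk.le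
  obtain ⟨R₀, hR₀⟩ := (isBounded_iff_subset_closedBall (0 : E3)).1 hsupp.isBounded
  set R : ℝ := max R₀ 1 with hRdef
  have hR1 : (1:ℝ) ≤ R := le_max_right _ _
  have hRsupp : tsupport f ⊆ closedBall (0 : E3) R :=
    hR₀.trans (closedBall_subset_closedBall (le_max_left _ _))
  obtain ⟨M, hM⟩ := hsupp.exists_bound_of_continuous hf
  have hg_int : Integrable (fun y : E3 => ‖f y‖ / ‖y‖) :=
    integrable_majorant f hf hRsupp hM
  have hae : ∀ᵐ y : E3 ∂(volume : Measure E3), y ≠ 0 := by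
    simpa using (Set.countable_singleton (0:E3)).ae_notMem (volume : Measure E3)
  set C : ℝ := 2*R + 4 * ‖k‖ * R^2 with hC
  have hC0 : 0 < C := by
    have := norm_nonneg k
    nlinarith
  set I : ℝ := ∫ y : E3, ‖f y‖ / ‖y‖ with hI
  have hI0 : 0 ≤ I := integral_nonneg fun y => by positivity
  rw [Metric.tendstoUniformlyOn_iff]
  intro ε hε
  set r₀ : ℝ := max (max (2*R) (2*‖k‖ * R^2)) (C * I/(4*Real.pi*ε) + 1) with hr₀def
  filter_upwards [Filter.eventually_ge_atTop r₀] with r hr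
  intro σ hσmem
  have hσ : ‖σ‖ = 1 := by simpa using hσmem
  have hr1 : 2*R ≤ r := le_trans ((le_max_left _ _).trans (le_max_left _ _)) hr
  have hr2 : 2*‖k‖ * R^2 ≤ r :=
    le_trans ((le_max_right _ _).trans (le_max_left _ _)) hr
  have hrbig : C * I/(4*Real.pi*ε) + 1 ≤ r := le_trans (le_max_right _ _) hr
  have hr0 : 0 < r := by linarith
  -- the two integrands
  set Gr : E3 → ℂ := fun y => (r : ℂ) *
    (Complex.exp (Complex.I * k * ((-r + ‖r • σ - y‖ + ‖y‖ : ℝ) : ℂ)) /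
      ((4 * Real.pi * ‖r • σ - y‖ * ‖y‖ : ℝ) : ℂ) * f y) with hGr
  set Gi : E3 → ℂ := fun y => ((4 * Real.pi : ℝ) : ℂ)⁻¹ *
    (Complex.exp (Complex.I * k * ((‖y‖ - ⟪σ, y⟫ : ℝ) : ℂ)) / ((‖y‖ : ℝ) : ℂ) * f y) with hGi
  -- measurability
  have hGr_meas : AEStronglyMeasurable Gr (volume : Measure E3) := by
    apply Measurable.aestronglyMeasurable
    apply Measurable.const_mul
    refine Measurable.mul (Measurable.div ?_ ?_) hf.measurable
    · exact (Complex.continuous_exp.comp (continuous_const.mul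
        (Complex.continuous_ofReal.comp ((continuous_const.add
          ((continuous_const.sub continuous_id).norm)).add continuous_norm)))).measurable
    · exact (Complex.continuous_ofReal.comp
        ((continuous_const.mul ((continuous_const.sub continuous_id).norm)).mul
          continuous_norm)).measurable
  have hGi_meas : AEStronglyMeasurable Gi (volume : Measure E3) := by
    apply Measurable.aestronglyMeasurable
    apply Measurable.const_mul
    refine Measurable.mul (Measurable.div ?_ ?_) hf.measurable
    · exact (Complex.continuous_exp.comp (continuous_const.mul
        (Complex.continuous_ofReal.comp (continuous_norm.sub
          (continuous_const.inner continuous_id))))).measurable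
    · exact (Complex.continuous_ofReal.comp continuous_norm).measurable
  -- integrability
  have hGr_int : Integrable Gr (volume : Measure E3) := by
    refine hg_int.mono' hGr_meas ?_
    filter_upwards [hae] with y hy0
    by_cases hyT : y ∈ tsupport f
    · have hyR : ‖y‖ ≤ R := by
        have := hRsupp hyT
        rwa [mem_closedBall_zero_iff] at this
      exact bound_r k hk0 hR1 hr1 hσ hyR hy0 (f y)
    · simp only [hGr, image_eq_zero_of_notMem_tsupport hyT, mul_zero, norm_zero]
      positivity
  have hGi_int : Integrable Gi (volume : Measure E3) := by
    refine hg_int.mono' hGi_meas ?_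
    filter_upwards [hae] with y hy0
    by_cases hyT : y ∈ tsupport f
    · exact bound_inf k hk0 hσ hy0 (f y)
    · simp only [hGi, image_eq_zero_of_notMem_tsupport hyT, mul_zero, norm_zero]
      positivity
  -- rewriting the two sides
  have hBr : Br2 k f r σ = ∫ y : E3, Gr y := by
    rw [Br2, ← integral_const_mul]
  have hphase' : ∀ y : E3, ‖y‖ * (1 - ⟪σ, ‖y‖⁻¹ • y⟫) = ‖y‖ - ⟪σ, y⟫ := by
    intro y
    rcases eq_or_ne y 0 with h | h
    · subst h
      simp
    · rw [real_inner_smul_right]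
      have hn : ‖y‖ ≠ 0 := norm_ne_zero_iff.2 h
      field_simp
  have hBi : Binf2 k f σ = ∫ y : E3, Gi y := by
    rw [Binf2, ← integral_const_mul]
    refine integral_congr_ae (Filter.Eventually.of_forall fun y => ?_)
    simp only [hGi]
    rw [hphase' y]
  -- pointwise difference bound
  have hdiff : ∀ᵐ y : E3 ∂(volume : Measure E3),
      ‖Gi y - Gr y‖ ≤ C / (r * (4 * Real.pi)) * (‖f y‖ / ‖y‖) := by
    filter_upwards [hae] with y hy0
    by_cases hyT : y ∈ tsupport f
    · have hyR : ‖y‖ ≤ R := by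
        have := hRsupp hyT
        rwa [mem_closedBall_zero_iff] at this
      exact key_est k hk0 hR1 hr1 hr2 hσ hyR hy0 (f y)
    · simp only [hGi, hGr, image_eq_zero_of_notMem_tsupport hyT, mul_zero, sub_zero, norm_zero]
      positivity
  have hbound_int : Integrable (fun y : E3 => C / (r * (4 * Real.pi)) * (‖f y‖ / ‖y‖))
      (volume : Measure E3) := hg_int.const_mul _
  -- conclude
  rw [dist_eq_norm, hBi, hBr, ← integral_sub hGi_int hGr_int]
  have hle := norm_integral_le_of_norm_le hbound_int hdiff
  have heval : ∫ y : E3, C / (r * (4 * Real.pi)) * (‖f y‖ / ‖y‖)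
      = C / (r * (4 * Real.pi)) * I := integral_const_mul _ _
  rw [heval] at hle
  refine lt_of_le_of_lt hle ?_
  have h : C * I / (4*Real.pi*ε) < r := by linarith
  have h2 : C * I < r * (4*Real.pi*ε) := (div_lt_iff₀ (by positivity)).1 h
  calc C / (r * (4 * Real.pi)) * I = C * I / (4 * Real.pi * r) := by ring
    _ < ε := by
      rw [div_lt_iff₀ (by positivity)]
      nlinarith [h2]

end Main
end
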